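/- arXiv:1603.05752 — 5 statements merged into one kernel-verified Lean document; each statement's English description precedes it below -/
import Mathlib

section
/- Let τ ≥ 1, k = ⌈0.95·τ⌉, T > 0, δ ≥ 0, let U : ℝ → ℝ be concave and nondecreasing, and let D : {1,…,τ} → ℝ be nonnegative. Let ϑ ⊆ {1,…,τ} be a set with |ϑ| = τ − k such that D[t] ≥ D[s] for every t ∈ ϑ and s ∉ ϑ, and define ρ*[t] = 0 for t ∈ ϑ and ρ*[t] = 1 otherwise. Then: (a) the supremum of Σ_{t=1}^{τ} U(T·min{X[t], D[t]}) − δ·max_t ρ[t]·X[t] over all X ≥ 0 and all ρ ∈ {0,1}^τ with Σ_t ρ[t] = k is attained at some pair whose binary component is ρ*; and (b) this optimal value equals the maximum of the concave problem: maximize Σ_{t=1}^{τ} U(T·X[t]) − δ·max_t ρ*[t]·X[t] subject to 0 ≤ X[t] ≤ D[t] for all t, and this maximum is attained. -/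
/-- With concave nondecreasing U, T > 0, δ ≥ 0, nonnegative demand D, a set ϑ of
τ − k slots of largest demand, and ρ*[t] = 0 on ϑ and 1 elsewhere:
(a) the supremum of the surplus over X ≥ 0 and binary ρ with Σ_t ρ[t] = k is attained at a
pair whose binary component is ρ*; (b) this optimal value equals the maximum value of the
concave problem max Σ_t U(T·X[t]) − δ·max_t ρ*[t]·X[t] s.t. 0 ≤ X ≤ D, which is attained. -/
theorem deterministic_surplus_reduction
    (τ : ℕ) (hτ : 1 ≤ τ) (k : ℕ) (hk : k = ⌈(0.95 : ℝ) * τ⌉₊)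
    (T δ : ℝ) (hT : 0 < T) (hδ : 0 ≤ δ)
    (U : ℝ → ℝ) (hUconc : ConcaveOn ℝ Set.univ U) (hU : Monotone U)
    (D : Fin τ → ℝ) (hD : ∀ t, 0 ≤ D t)
    (ϑ : Finset (Fin τ)) (hϑcard : ϑ.card = τ - k)
    (hϑ : ∀ t ∈ ϑ, ∀ s ∉ ϑ, D s ≤ D t)
    (ρstar : Fin τ → ℝ) (hρstar : ∀ t, ρstar t = if t ∈ ϑ then 0 else 1) :
    (∃ Xstar : Fin τ → ℝ, (∀ t, 0 ≤ Xstar t) ∧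
      (∑ t, U (T * min (Xstar t) (D t))) - δ * (⨆ t, ρstar t * Xstar t)
        = sSup {v : ℝ | ∃ X ρ : Fin τ → ℝ, (∀ t, 0 ≤ X t) ∧
            (∀ t, ρ t = 0 ∨ ρ t = 1) ∧ (∑ t, ρ t) = (k : ℝ) ∧
            v = (∑ t, U (T * min (X t) (D t))) - δ * (⨆ t, ρ t * X t)}) ∧
    (sSup {v : ℝ | ∃ X ρ : Fin τ → ℝ, (∀ t, 0 ≤ X t) ∧
            (∀ t, ρ t = 0 ∨ ρ t = 1) ∧ (∑ t, ρ t) = (k : ℝ) ∧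
            v = (∑ t, U (T * min (X t) (D t))) - δ * (⨆ t, ρ t * X t)}
      = sSup {v : ℝ | ∃ X : Fin τ → ℝ, (∀ t, 0 ≤ X t ∧ X t ≤ D t) ∧
            v = (∑ t, U (T * X t)) - δ * (⨆ t, ρstar t * X t)}) ∧
    (∃ X : Fin τ → ℝ, (∀ t, 0 ≤ X t ∧ X t ≤ D t) ∧
      (∑ t, U (T * X t)) - δ * (⨆ t, ρstar t * X t)
        = sSup {v : ℝ | ∃ X' : Fin τ → ℝ, (∀ t, 0 ≤ X' t ∧ X' t ≤ D t) ∧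
            v = (∑ t, U (T * X' t)) - δ * (⨆ t, ρstar t * X' t)}) := by
  classical
  haveI : Nonempty (Fin τ) := ⟨⟨0, hτ⟩⟩
  have hτR : (1:ℝ) ≤ (τ:ℝ) := by exact_mod_cast hτ
  have hkτ : k ≤ τ := by
    rw [hk]
    have : (0.95 : ℝ) * τ ≤ (τ : ℕ) := by push_cast; nlinarith
    exact Nat.ceil_le.mpr this
  have hk1 : 1 ≤ k := by
    rw [hk]
    exact Nat.one_le_iff_ne_zero.mpr (by
      intro h0
      have := Nat.ceil_eq_zero.mp h0
      nlinarith)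
  -- basic facts about ρstar
  have hcompl : ϑᶜ.card = k := by
    rw [Finset.card_compl, hϑcard, Fintype.card_fin]; omega
  have hsumρstar : (∑ t, ρstar t) = (k : ℝ) := by
    have h1 : (∑ t, ρstar t) = ∑ t ∈ ϑ, ρstar t + ∑ t ∈ ϑᶜ, ρstar t :=
      (Finset.sum_add_sum_compl ϑ ρstar).symm
    have h2 : ∑ t ∈ ϑ, ρstar t = 0 :=
      Finset.sum_eq_zero fun t ht => by rw [hρstar]; simp [ht]
    have h3 : ∑ t ∈ ϑᶜ, ρstar t = (k : ℝ) := by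
      have h3' : ∑ t ∈ ϑᶜ, ρstar t = ∑ _t ∈ ϑᶜ, (1:ℝ) :=
        Finset.sum_congr rfl fun t ht => by
          rw [hρstar, if_neg (Finset.mem_compl.mp ht)]
      rw [h3', Finset.sum_const, hcompl, nsmul_eq_mul, mul_one]
    rw [h1, h2, h3, zero_add]
  have hρstar01 : ∀ t, ρstar t = 0 ∨ ρstar t = 1 := by
    intro t; rw [hρstar]; by_cases h : t ∈ ϑ <;> simp [h]
  have hbdd : ∀ f : Fin τ → ℝ, BddAbove (Set.range f) :=
    fun f => (Set.finite_range f).bddAbove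
  -- the concave objective and feasible set
  set g : (Fin τ → ℝ) → ℝ :=
    fun X => (∑ t, U (T * X t)) - δ * (⨆ t, ρstar t * X t) with hg
  set K : Set (Fin τ → ℝ) := {X | ∀ t, 0 ≤ X t ∧ X t ≤ D t} with hKdef
  have hKcomp : IsCompact K := by
    have hKeq : K = Set.pi Set.univ (fun t => Set.Icc 0 (D t)) := by
      ext X
      simp only [hKdef, Set.mem_setOf_eq, Set.mem_pi, Set.mem_univ, Set.mem_Icc,
        forall_const]
    rw [hKeq]; exact isCompact_univ_pi fun t => isCompact_Icc
  have hKne : K.Nonempty := ⟨fun _ => 0, fun t => ⟨le_refl 0, hD t⟩⟩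
  have hUcont : Continuous U :=
    continuousOn_univ.mp (hUconc.continuousOn isOpen_univ)
  have hgcont : Continuous g := by
    apply Continuous.sub
    · exact continuous_finset_sum _ fun t _ =>
        hUcont.comp (continuous_const.mul (continuous_apply t))
    · apply Continuous.mul continuous_const
      have h : (fun X : Fin τ → ℝ => ⨆ t, ρstar t * X t)
          = fun X => Finset.univ.sup' Finset.univ_nonempty (fun t => ρstar t * X t) := by
        funext X; rw [Finset.sup'_univ_eq_ciSup]
      rw [h]
      exact Continuous.finset_sup'_apply _ fun t _ => continuous_const.mul (continuous_apply t)
  obtain ⟨Xopt, hXoptK, hXoptmax⟩ := hKcomp.exists_isMaxOn hKne hgcont.continuousOn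
  -- abbreviations for the two sets
  set S1 : Set ℝ := {v : ℝ | ∃ X ρ : Fin τ → ℝ, (∀ t, 0 ≤ X t) ∧
      (∀ t, ρ t = 0 ∨ ρ t = 1) ∧ (∑ t, ρ t) = (k : ℝ) ∧
      v = (∑ t, U (T * min (X t) (D t))) - δ * (⨆ t, ρ t * X t)} with hS1def
  set S2 : Set ℝ := {v : ℝ | ∃ X : Fin τ → ℝ, (∀ t, 0 ≤ X t ∧ X t ≤ D t) ∧
      v = (∑ t, U (T * X t)) - δ * (⨆ t, ρstar t * X t)} with hS2def
  have hS2great : IsGreatest S2 (g Xopt) :=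
    ⟨⟨Xopt, hXoptK, rfl⟩, by rintro v ⟨X, hX, rfl⟩; exact hXoptmax hX⟩
  have hS2sup : sSup S2 = g Xopt := hS2great.csSup_eq
  -- the exchange argument: every combinatorial value is ≤ g Xopt
  have hexch : ∀ X ρ : Fin τ → ℝ, (∀ t, 0 ≤ X t) → (∀ t, ρ t = 0 ∨ ρ t = 1) →
      (∑ t, ρ t) = (k : ℝ) →
      (∑ t, U (T * min (X t) (D t))) - δ * (⨆ t, ρ t * X t) ≤ g Xopt := by
    intro X ρ hX hρ hρsum
    set Y : Fin τ → ℝ := fun t => min (X t) (D t) with hYdef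
    have hY0 : ∀ t, 0 ≤ Y t := fun t => le_min (hX t) (hD t)
    have hYD : ∀ t, Y t ≤ D t := fun t => min_le_right _ _
    set A : Finset (Fin τ) := Finset.univ.filter (fun t => ρ t = 1) with hAdef
    have hAmem : ∀ t, t ∈ A ↔ ρ t = 1 := by
      intro t; simp [hAdef]
    have hAcard : A.card = k := by
      have h1 : (∑ t, ρ t) = (A.card : ℝ) := by
        rw [← Finset.sum_add_sum_compl A ρ]
        have h2 : ∑ t ∈ A, ρ t = (A.card : ℝ) := by
          rw [Finset.sum_congr rfl (fun t ht => (hAmem t).mp ht)]; simp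
        have h3 : ∑ t ∈ Aᶜ, ρ t = 0 := Finset.sum_eq_zero fun t ht => by
          rcases hρ t with h | h
          · exact h
          · exact absurd ((hAmem t).mpr h) (Finset.mem_compl.mp ht)
        rw [h2, h3, add_zero]
      have := h1.symm.trans hρsum
      exact_mod_cast this
    have hAne : A.Nonempty := Finset.card_pos.mp (by rw [hAcard]; omega)
    set c : ℝ := A.sup' hAne Y with hcdef
    have hc0 : 0 ≤ c := le_trans (hY0 hAne.choose) (Finset.le_sup' Y hAne.choose_spec)
    have hYc : ∀ t ∈ A, Y t ≤ c := fun t ht => Finset.le_sup' Y ht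
    have hcfee : c ≤ ⨆ t, ρ t * X t := by
      apply Finset.sup'_le
      intro a ha
      calc Y a ≤ X a := min_le_left _ _
        _ = ρ a * X a := by rw [(hAmem a).mp ha, one_mul]
        _ ≤ ⨆ t, ρ t * X t := le_ciSup (hbdd fun t => ρ t * X t) a
    set B : Finset (Fin τ) := ϑᶜ ∩ Aᶜ with hBdef
    set C : Finset (Fin τ) := ϑ ∩ A with hCdef
    have hBmem : ∀ t, t ∈ B ↔ t ∉ ϑ ∧ t ∉ A := by intro t; simp [hBdef]
    have hCmem : ∀ t, t ∈ C ↔ t ∈ ϑ ∧ t ∈ A := by intro t; simp [hCdef]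
    have hBCdisj : Disjoint B C := by
      rw [Finset.disjoint_left]
      intro t htB htC
      exact ((hBmem t).mp htB).1 ((hCmem t).mp htC).1
    have hBC : B.card = C.card := by
      have h1 : B = (ϑ ∪ A)ᶜ := by rw [hBdef, Finset.compl_union]
      have h2 := Finset.card_union_add_card_inter ϑ A
      have h3 : (ϑ ∪ A).card ≤ τ :=
        le_trans (Finset.card_le_univ _) (by simp)
      have h4 : B.card = τ - (ϑ ∪ A).card := by
        rw [h1, Finset.card_compl, Fintype.card_fin]
      rw [hϑcard, hAcard] at h2
      rw [hCdef] at *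
      omega
    set e : ↥B ≃ ↥C := Finset.equivOfCardEq hBC with hedef
    set X'' : Fin τ → ℝ := fun t =>
      if hB : t ∈ B then min (Y t) (Y ((e ⟨t, hB⟩ : ↥C) : Fin τ))
      else if hC : t ∈ C then max (Y ((e.symm ⟨t, hC⟩ : ↥B) : Fin τ)) (Y t)
      else Y t with hX''def
    have hX''B : ∀ (t : Fin τ) (h : t ∈ B),
        X'' t = min (Y t) (Y ((e ⟨t, h⟩ : ↥C) : Fin τ)) := by
      intro t h; rw [hX''def]; simp only [dif_pos h]
    have hX''C : ∀ (t : Fin τ) (h : t ∈ C),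
        X'' t = max (Y ((e.symm ⟨t, h⟩ : ↥B) : Fin τ)) (Y t) := by
      intro t h
      have hnB : t ∉ B := fun hB => Finset.disjoint_left.mp hBCdisj hB h
      rw [hX''def]; simp only [dif_neg hnB, dif_pos h]
    have hX''rest : ∀ t : Fin τ, t ∉ B → t ∉ C → X'' t = Y t := by
      intro t h1 h2; rw [hX''def]; simp only [dif_neg h1, dif_neg h2]
    -- feasibility of X''
    have hX''K : X'' ∈ K := by
      intro t
      by_cases hB : t ∈ B
      · rw [hX''B t hB]
        exact ⟨le_min (hY0 t) (hY0 _), le_trans (min_le_left _ _) (hYD t)⟩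
      · by_cases hC : t ∈ C
        · rw [hX''C t hC]
          refine ⟨le_trans (hY0 t) (le_max_right _ _), max_le ?_ (hYD t)⟩
          set s : Fin τ := ((e.symm ⟨t, hC⟩ : ↥B) : Fin τ) with hsdef
          have hsB : s ∈ B := (e.symm ⟨t, hC⟩).2
          exact le_trans (hYD s) (hϑ t ((hCmem t).mp hC).1 s ((hBmem s).mp hsB).1)
        · rw [hX''rest t hB hC]
          exact ⟨hY0 t, hYD t⟩
    -- sum of utilities is preserved
    have hminmax : ∀ a b : ℝ, U (T * min a b) + U (T * max a b) = U (T * a) + U (T * b) := by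
      intro a b
      rcases le_total a b with h | h
      · rw [min_eq_left h, max_eq_right h]
      · rw [min_eq_right h, max_eq_left h, add_comm]
    have hsplit : ∀ f : Fin τ → ℝ,
        ∑ t, f t = (∑ t ∈ B, f t + ∑ t ∈ C, f t) + ∑ t ∈ (B ∪ C)ᶜ, f t := by
      intro f
      rw [← Finset.sum_union hBCdisj, Finset.sum_add_sum_compl]
    have hsumeq : ∑ t, U (T * X'' t) = ∑ t, U (T * Y t) := by
      rw [hsplit (fun t => U (T * X'' t)), hsplit (fun t => U (T * Y t))]
      have hrest : ∑ t ∈ (B ∪ C)ᶜ, U (T * X'' t) = ∑ t ∈ (B ∪ C)ᶜ, U (T * Y t) := by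
        apply Finset.sum_congr rfl
        intro t ht
        have ht' := Finset.mem_compl.mp ht
        rw [Finset.mem_union] at ht'
        push_neg at ht'
        rw [hX''rest t ht'.1 ht'.2]
      have hBsum : ∑ t ∈ B, U (T * X'' t)
          = ∑ x : ↥B, U (T * min (Y ↑x) (Y ((e x : ↥C) : Fin τ))) := by
        rw [← Finset.sum_coe_sort B (fun t => U (T * X'' t))]
        apply Finset.sum_congr rfl
        intro x _
        rw [hX''B ↑x x.2]
      have hCsum : ∑ t ∈ C, U (T * X'' t)
          = ∑ x : ↥B, U (T * max (Y ↑x) (Y ((e x : ↥C) : Fin τ))) := by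
        rw [← Finset.sum_coe_sort C (fun t => U (T * X'' t))]
        rw [← Equiv.sum_comp e (fun y : ↥C => U (T * X'' ↑y))]
        apply Finset.sum_congr rfl
        intro x _
        rw [hX''C ↑(e x) (e x).2]
        congr 2
        simp
      have hBsum' : ∑ t ∈ B, U (T * Y t) = ∑ x : ↥B, U (T * Y ↑x) :=
        (Finset.sum_coe_sort B (fun t => U (T * Y t))).symm
      have hCsum' : ∑ t ∈ C, U (T * Y t) = ∑ x : ↥B, U (T * Y ((e x : ↥C) : Fin τ)) := by
        rw [← Finset.sum_coe_sort C (fun t => U (T * Y t))]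
        rw [← Equiv.sum_comp e (fun y : ↥C => U (T * Y ↑y))]
      rw [hrest, hBsum, hCsum, hBsum', hCsum', ← Finset.sum_add_distrib,
        ← Finset.sum_add_distrib]
      congr 1
      apply Finset.sum_congr rfl
      intro x _
      exact hminmax _ _
    -- fee bound for X'' under ρstar
    have hfee'' : (⨆ t, ρstar t * X'' t) ≤ c := by
      apply ciSup_le
      intro t
      rw [hρstar t]
      by_cases hθ : t ∈ ϑ
      · simp [hθ, hc0]
      · rw [if_neg hθ, one_mul]
        by_cases hB : t ∈ B
        · rw [hX''B t hB]
          exact le_trans (min_le_right _ _) (hYc _ ((hCmem _).mp (e ⟨t, hB⟩).2).2)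
        · have hnC : t ∉ C := fun hC => hθ ((hCmem t).mp hC).1
          rw [hX''rest t hB hnC]
          have htA : t ∈ A := by
            by_contra htA
            exact hB ((hBmem t).mpr ⟨hθ, htA⟩)
          exact hYc t htA
    -- chain of inequalities
    have hfee0 : 0 ≤ ⨆ t, ρ t * X t := le_trans hc0 hcfee
    calc (∑ t, U (T * Y t)) - δ * (⨆ t, ρ t * X t)
        ≤ (∑ t, U (T * Y t)) - δ * c := by
          have := mul_le_mul_of_nonneg_left hcfee hδ
          linarith
      _ = (∑ t, U (T * X'' t)) - δ * c := by rw [hsumeq]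
      _ ≤ (∑ t, U (T * X'' t)) - δ * (⨆ t, ρstar t * X'' t) := by
          have := mul_le_mul_of_nonneg_left hfee'' hδ
          linarith
      _ = g X'' := rfl
      _ ≤ g Xopt := hXoptmax hX''K
  -- S2 ⊆ S1
  have hS2subS1 : S2 ⊆ S1 := by
    rintro v ⟨X, hX, rfl⟩
    refine ⟨X, ρstar, fun t => (hX t).1, hρstar01, hsumρstar, ?_⟩
    congr 1
    apply Finset.sum_congr rfl
    intro t _
    rw [min_eq_left (hX t).2]
  have hS1bdd : BddAbove S1 := by
    refine ⟨g Xopt, ?_⟩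
    rintro v ⟨X, ρ, hX, hρ, hρs, rfl⟩
    exact hexch X ρ hX hρ hρs
  have hS1ne : S1.Nonempty := ⟨g Xopt, hS2subS1 hS2great.1⟩
  have hS1sup : sSup S1 = g Xopt := by
    apply le_antisymm
    · apply csSup_le hS1ne
      rintro v ⟨X, ρ, hX, hρ, hρs, rfl⟩
      exact hexch X ρ hX hρ hρs
    · exact le_csSup hS1bdd (hS2subS1 hS2great.1)
  refine ⟨⟨Xopt, fun t => (hXoptK t).1, ?_⟩, by rw [hS1sup, hS2sup], ⟨Xopt, hXoptK, hS2sup.symm⟩⟩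
  rw [hS1sup]
  have hmin : ∀ t, min (Xopt t) (D t) = Xopt t := fun t => min_eq_left (hXoptK t).2
  simp only [hmin]
  rfl
end

section
/- Let τ ≥ 1, k = ⌈0.95·τ⌉, T > 0, δ ≥ 0, let U : ℝ → ℝ be concave and nondecreasing, let D : {1,…,τ} → ℝ be nonnegative, and let ϑ ⊆ {1,…,τ} with |ϑ| = τ − k be such that D[t] ≥ D[s] for every t ∈ ϑ and s ∉ ϑ. Then there exist μ ≥ 0 and an optimal solution X* of the problem: maximize Σ_{t=1}^{τ} U(T·X[t]) − δ·max_{t∉ϑ} X[t] subject to 0 ≤ X[t] ≤ D[t] for all t, such that X*[t] = D[t] for all t ∈ ϑ and X*[t] = min{μ, D[t]} for all t ∉ ϑ. -/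
/-- With concave nondecreasing U, T > 0, δ ≥ 0, nonnegative demand D, and ϑ a set
of τ − k slots of largest demand, there exist μ ≥ 0 and an optimal solution X* of
max Σ_t U(T·X[t]) − δ·max_{t∉ϑ} X[t] s.t. 0 ≤ X ≤ D, such that X*[t] = D[t] on ϑ and
X*[t] = min{μ, D[t]} off ϑ. -/
theorem optimal_solution_water_filling_form
    (τ : ℕ) (hτ : 1 ≤ τ) (k : ℕ) (hk : k = ⌈(0.95 : ℝ) * τ⌉₊)
    (T δ : ℝ) (hT : 0 < T) (hδ : 0 ≤ δ)
    (U : ℝ → ℝ) (hUconc : ConcaveOn ℝ Set.univ U) (hU : Monotone U)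
    (D : Fin τ → ℝ) (hD : ∀ t, 0 ≤ D t)
    (ϑ : Finset (Fin τ)) (hϑcard : ϑ.card = τ - k)
    (hϑ : ∀ t ∈ ϑ, ∀ s ∉ ϑ, D s ≤ D t) :
    ∃ (μ : ℝ) (Xstar : Fin τ → ℝ), 0 ≤ μ ∧
      (∀ t, 0 ≤ Xstar t ∧ Xstar t ≤ D t) ∧
      (∀ t ∈ ϑ, Xstar t = D t) ∧
      (∀ t ∉ ϑ, Xstar t = min μ (D t)) ∧
      (∀ X : Fin τ → ℝ, (∀ t, 0 ≤ X t ∧ X t ≤ D t) →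
        (∑ t, U (T * X t)) - δ * (⨆ t : {t : Fin τ // t ∉ ϑ}, X t) ≤
        (∑ t, U (T * Xstar t)) - δ * (⨆ t : {t : Fin τ // t ∉ ϑ}, Xstar t)) := by
  classical
  set S := {t : Fin τ // t ∉ ϑ} with hS
  have hUcont : Continuous U := by
    rw [← continuousOn_univ]
    exact hUconc.continuousOn isOpen_univ
  have hUmul : ∀ {a b : ℝ}, a ≤ b → U (T * a) ≤ U (T * b) := fun hab =>
    hU (mul_le_mul_of_nonneg_left hab hT.le)
  by_cases hne : Nonempty S
  · -- nonempty off-ϑ set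
    haveI := hne
    have hbdd : ∀ f : S → ℝ, BddAbove (Set.range f) := fun f =>
      Set.Finite.bddAbove (Set.finite_range f)
    obtain ⟨t0, ht0⟩ := Finite.exists_max (fun t : S => D t.1)
    set M : ℝ := D t0.1 with hM
    have hM0 : 0 ≤ M := hD _
    set Xf : ℝ → Fin τ → ℝ := fun μ t => if t ∈ ϑ then D t else min μ (D t) with hXf
    have hsup : ∀ μ, (⨆ t : S, Xf μ t) = min μ M := by
      intro μ
      have h1 : ∀ t : S, Xf μ t.1 = min μ (D t.1) := fun t => if_neg t.2
      apply le_antisymm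
      · exact ciSup_le fun t => by rw [h1 t]; exact min_le_min le_rfl (ht0 t)
      · refine le_ciSup_of_le (hbdd _) t0 ?_
        rw [h1 t0]
    set F : ℝ → ℝ := fun μ => (∑ t, U (T * Xf μ t)) - δ * min μ M with hF
    have hFcont : Continuous F := by
      apply Continuous.sub
      · apply continuous_finset_sum
        intro t _
        by_cases h : t ∈ ϑ
        · simp only [hXf, if_pos h]; exact continuous_const
        · simp only [hXf, if_neg h]
          exact hUcont.comp (continuous_const.mul (continuous_id.min continuous_const))
      · exact continuous_const.mul (continuous_id.min continuous_const)
    obtain ⟨μs, hμsmem, hμsmax⟩ := isCompact_Icc.exists_isMaxOn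
      ⟨0, Set.left_mem_Icc.2 hM0⟩ (hFcont.continuousOn : ContinuousOn F (Set.Icc 0 M))
    refine ⟨μs, Xf μs, hμsmem.1, ?_, ?_, ?_, ?_⟩
    · intro t
      by_cases h : t ∈ ϑ
      · simp [hXf, if_pos h, hD t]
      · simp only [hXf, if_neg h]
        exact ⟨le_min hμsmem.1 (hD t), min_le_right _ _⟩
    · intro t ht; simp [hXf, if_pos ht]
    · intro t ht; simp [hXf, if_neg ht]
    · intro X hX
      set μX : ℝ := ⨆ t : S, X t.1 with hμX
      have hμX0 : 0 ≤ μX := le_trans (hX t0.1).1 (le_ciSup (hbdd fun t : S => X t.1) t0)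
      have hμXM : μX ≤ M := ciSup_le fun t => (hX t.1).2.trans (ht0 t)
      have hle1 : (∑ t, U (T * X t)) - δ * μX ≤ F μX := by
        have hsum : (∑ t, U (T * X t)) ≤ ∑ t, U (T * Xf μX t) := by
          apply Finset.sum_le_sum
          intro t _
          by_cases h : t ∈ ϑ
          · simp only [hXf, if_pos h]; exact hUmul (hX t).2
          · simp only [hXf, if_neg h]
            exact hUmul (le_min (le_ciSup (hbdd fun t : S => X t.1) ⟨t, h⟩) (hX t).2)
        have hmin : min μX M ≤ μX := min_le_left _ _
        have : δ * min μX M ≤ δ * μX := mul_le_mul_of_nonneg_left hmin hδ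
        simp only [hF]
        linarith
      have hle2 : F μX ≤ F μs := hμsmax ⟨hμX0, hμXM⟩
      have hrhs : (∑ t, U (T * Xf μs t)) - δ * (⨆ t : S, Xf μs t.1) = F μs := by
        rw [hsup μs]
      rw [hμX] at hle1
      calc (∑ t, U (T * X t)) - δ * (⨆ t : S, X t.1) ≤ F μX := hle1
        _ ≤ F μs := hle2
        _ = (∑ t, U (T * Xf μs t)) - δ * (⨆ t : S, Xf μs t.1) := hrhs.symm
  · -- ϑ = everything
    haveI : IsEmpty S := not_nonempty_iff.mp hne
    refine ⟨0, D, le_rfl, fun t => ⟨hD t, le_rfl⟩, fun t _ => rfl,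
      fun t ht => (IsEmpty.false (⟨t, ht⟩ : S)).elim, ?_⟩
    · intro X hX
      have h1 : (⨆ t : S, X t.1) = 0 := Real.iSup_of_isEmpty _
      have h2 : (⨆ t : S, D t.1) = 0 := Real.iSup_of_isEmpty _
      rw [h1, h2]
      have : (∑ t, U (T * X t)) ≤ ∑ t, U (T * D t) :=
        Finset.sum_le_sum fun t _ => hUmul (hX t).2
      linarith
end

section
/- Let τ ≥ 1, T ≥ 0, μ ≥ 0, let U : ℝ → ℝ be nondecreasing, let D : {1,…,τ} → ℝ, and let ϑ, ν ⊆ {1,…,τ} with |ϑ| = |ν| be such that D[t₁] ≥ D[t₂] for every t₁ ∈ ϑ∖ν and t₂ ∈ ν∖ϑ. Then Σ_{t∈ϑ} U(T·D[t]) + Σ_{t∉ϑ} U(T·min{μ, D[t]}) ≥ Σ_{t∈ν} U(T·D[t]) + Σ_{t∉ν} U(T·min{μ, D[t]}). -/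
/-- For nondecreasing U, T ≥ 0, μ ≥ 0, demand D, and equal-size sets ϑ, ν of time
slots with D[t₁] ≥ D[t₂] for all t₁ ∈ ϑ∖ν and t₂ ∈ ν∖ϑ, the net utility obtained by serving
demand fully on ϑ and capping at μ elsewhere dominates the analogous quantity for ν. -/
theorem uncapped_on_top_slots_dominates
    (τ : ℕ) (hτ : 1 ≤ τ) (T μ : ℝ) (hT : 0 ≤ T) (hμ : 0 ≤ μ)
    (U : ℝ → ℝ) (hU : Monotone U) (D : Fin τ → ℝ)
    (ϑ ν : Finset (Fin τ)) (hcard : ϑ.card = ν.card)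
    (h : ∀ t₁ ∈ ϑ \ ν, ∀ t₂ ∈ ν \ ϑ, D t₂ ≤ D t₁) :
    (∑ t ∈ ν, U (T * D t)) + (∑ t ∈ νᶜ, U (T * min μ (D t))) ≤
    (∑ t ∈ ϑ, U (T * D t)) + (∑ t ∈ ϑᶜ, U (T * min μ (D t))) := by
  classical
  have key : ∀ a b : ℝ, b ≤ a →
      U (T * b) + U (T * min μ a) ≤ U (T * a) + U (T * min μ b) := by
    intro a b hba
    rcases le_total a μ with h1 | h1
    · rw [min_eq_right h1, min_eq_right (hba.trans h1)]; linarith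
    · rw [min_eq_left h1]
      rcases le_total b μ with h2 | h2
      · rw [min_eq_right h2]
        have := hU (mul_le_mul_of_nonneg_left h1 hT)
        linarith
      · rw [min_eq_left h2]
        have := hU (mul_le_mul_of_nonneg_left hba hT)
        linarith
  have hcards : (ϑ \ ν).card = (ν \ ϑ).card := Finset.card_sdiff_comm hcard
  set e := Finset.equivOfCardEq hcards with he
  have main : (∑ t ∈ ν \ ϑ, U (T * D t)) + (∑ t ∈ ϑ \ ν, U (T * min μ (D t))) ≤
      (∑ t ∈ ϑ \ ν, U (T * D t)) + (∑ t ∈ ν \ ϑ, U (T * min μ (D t))) := by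
    have h1 : ∀ g : Fin τ → ℝ, ∑ t ∈ ν \ ϑ, g t = ∑ x : (ϑ \ ν : Finset (Fin τ)), g (e x) := by
      intro g
      rw [← Finset.sum_coe_sort (ν \ ϑ) g]
      exact (Fintype.sum_equiv e _ _ (fun x => rfl)).symm
    have h2 : ∀ g : Fin τ → ℝ, ∑ t ∈ ϑ \ ν, g t = ∑ x : (ϑ \ ν : Finset (Fin τ)), g x := by
      intro g; rw [← Finset.sum_coe_sort (ϑ \ ν) g]
    rw [h1, h1, h2, h2, ← Finset.sum_add_distrib, ← Finset.sum_add_distrib]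
    apply Finset.sum_le_sum
    intro x _
    exact key (D x) (D (e x)) (h x x.2 (e x) (e x).2)
  have hν : ∑ t ∈ ν, U (T * D t) =
      (∑ t ∈ ν ∩ ϑ, U (T * D t)) + ∑ t ∈ ν \ ϑ, U (T * D t) :=
    (Finset.sum_inter_add_sum_sdiff ν ϑ _).symm
  have hϑ : ∑ t ∈ ϑ, U (T * D t) =
      (∑ t ∈ ϑ ∩ ν, U (T * D t)) + ∑ t ∈ ϑ \ ν, U (T * D t) :=
    (Finset.sum_inter_add_sum_sdiff ϑ ν _).symm
  have hνc : ∑ t ∈ νᶜ, U (T * min μ (D t)) =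
      (∑ t ∈ νᶜ ∩ ϑᶜ, U (T * min μ (D t))) + ∑ t ∈ ϑ \ ν, U (T * min μ (D t)) := by
    have hs : νᶜ \ ϑᶜ = ϑ \ ν := by ext t; simp; tauto
    rw [← Finset.sum_inter_add_sum_sdiff νᶜ ϑᶜ, hs]
  have hϑc : ∑ t ∈ ϑᶜ, U (T * min μ (D t)) =
      (∑ t ∈ ϑᶜ ∩ νᶜ, U (T * min μ (D t))) + ∑ t ∈ ν \ ϑ, U (T * min μ (D t)) := by
    have hs : ϑᶜ \ νᶜ = ν \ ϑ := by ext t; simp; tauto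
    rw [← Finset.sum_inter_add_sum_sdiff ϑᶜ νᶜ, hs]
  rw [hν, hϑ, hνc, hϑc, Finset.inter_comm ν ϑ, Finset.inter_comm νᶜ ϑᶜ]
  linarith
end

section
/- Let τ ≥ 1, T ≥ 0, let U : ℝ → ℝ be nondecreasing, let ρ ∈ {0,1}^τ, let X : {1,…,τ} → ℝ be nonnegative, set μ = max_t ρ[t]·X[t], and let D̄ : {1,…,τ} → ℝ be nonnegative. Define X̄[t] = D̄[t] if ρ[t] = 0 or D̄[t] ≤ μ, and X̄[t] = μ otherwise. Then for every t, U(T·min{X̄[t], D̄[t]}) ≥ U(T·min{X[t], D̄[t]}). -/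
/-- With μ = max_t ρ[t]·X[t] and the updated usage X̄ defined as on-demand when
ρ[t] = 0 or the exposed demand does not exceed μ, and capped at μ otherwise, the per-slot
utility of the updated usage dominates that of the planned usage:
U(T·min{X̄[t], D̄[t]}) ≥ U(T·min{X[t], D̄[t]}) for all t. -/
theorem updated_usage_utility_dominates
    (τ : ℕ) (hτ : 1 ≤ τ) (T : ℝ) (hT : 0 ≤ T)
    (U : ℝ → ℝ) (hU : Monotone U)
    (ρ : Fin τ → ℝ) (hρ : ∀ t, ρ t = 0 ∨ ρ t = 1)
    (X : Fin τ → ℝ) (hX : ∀ t, 0 ≤ X t)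
    (μ : ℝ) (hμ : μ = ⨆ t, ρ t * X t)
    (Dbar : Fin τ → ℝ) (hDbar : ∀ t, 0 ≤ Dbar t)
    (Xbar : Fin τ → ℝ)
    (hXbar : ∀ t, Xbar t = if ρ t = 0 ∨ Dbar t ≤ μ then Dbar t else μ) :
    ∀ t, U (T * min (X t) (Dbar t)) ≤ U (T * min (Xbar t) (Dbar t)) := by
  intro t
  apply hU
  apply mul_le_mul_of_nonneg_left _ hT
  rw [hXbar t]
  by_cases h : ρ t = 0 ∨ Dbar t ≤ μ
  · simp [h, min_le_right]
  · simp only [h, if_false]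
    push_neg at h
    obtain ⟨h0, h1⟩ := h
    have hρ1 : ρ t = 1 := (hρ t).resolve_left h0
    have hXμ : X t ≤ μ := by
      rw [hμ]
      have : X t = ρ t * X t := by rw [hρ1, one_mul]
      rw [this]
      exact le_ciSup (Set.Finite.bddAbove (Set.finite_range fun s => ρ s * X s)) t
    exact le_min (min_le_left _ _ |>.trans hXμ) (min_le_right _ _)
end

section
/- Let τ ≥ 1, k = ⌈0.95·τ⌉, T ≥ 0, δ ≥ 0, let U : ℝ → ℝ be nondecreasing, let X : {1,…,τ} → ℝ be nonnegative, let ρ ∈ {0,1}^τ with Σ_t ρ[t] = k attain the 95th percentile of X, i.e., μ := max_t ρ[t]·X[t] = μ95(X), and let D̄ : {1,…,τ} → ℝ be nonnegative. Define X̄[t] = D̄[t] if ρ[t] = 0 or D̄[t] ≤ μ, and X̄[t] = μ otherwise. Then Σ_{t=1}^{τ} U(T·X̄[t]) − δ·μ95(X̄) ≥ Σ_{t=1}^{τ} U(T·min{X[t], D̄[t]}) − δ·μ95(X); that is, the surplus obtained with the updated usage X̄ is no less than the surplus obtained with the planned usage X evaluated against the exposed demand. -/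
/-- The 95th percentile usage: the minimum, over all subsets S of the τ time slots with
|S| = ⌈0.95·τ⌉, of max_{t∈S} x[t]. -/
noncomputable def mu95 (τ : ℕ) (x : Fin τ → ℝ) : ℝ :=
  sInf {m : ℝ | ∃ (S : Finset (Fin τ)) (hS : S.Nonempty),
    S.card = ⌈(0.95 : ℝ) * τ⌉₊ ∧ m = S.sup' hS x}

/-- The surplus obtained with the updated usage X̄ (on-demand when ρ[t] = 0 or
the exposed demand does not exceed μ = μ95(X), capped at μ otherwise) is no less than the
surplus obtained with the planned usage X evaluated against the exposed demand D̄. -/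
theorem updated_usage_surplus_dominates
    (τ : ℕ) (hτ : 1 ≤ τ) (k : ℕ) (hk : k = ⌈(0.95 : ℝ) * τ⌉₊)
    (T δ : ℝ) (hT : 0 ≤ T) (hδ : 0 ≤ δ)
    (U : ℝ → ℝ) (hU : Monotone U)
    (X : Fin τ → ℝ) (hX : ∀ t, 0 ≤ X t)
    (ρ : Fin τ → ℝ) (hρ : ∀ t, ρ t = 0 ∨ ρ t = 1) (hρsum : (∑ t, ρ t) = (k : ℝ))
    (μ : ℝ) (hμ : μ = ⨆ t, ρ t * X t) (hμ95 : μ = mu95 τ X)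
    (Dbar : Fin τ → ℝ) (hDbar : ∀ t, 0 ≤ Dbar t)
    (Xbar : Fin τ → ℝ)
    (hXbar : ∀ t, Xbar t = if ρ t = 0 ∨ Dbar t ≤ μ then Dbar t else μ) :
    (∑ t, U (T * min (X t) (Dbar t))) - δ * mu95 τ X ≤
    (∑ t, U (T * Xbar t)) - δ * mu95 τ Xbar := by
  haveI : Nonempty (Fin τ) := ⟨⟨0, hτ⟩⟩
  have hbdd : BddAbove (Set.range fun t => ρ t * X t) := Set.Finite.bddAbove (Set.finite_range _)
  -- μ ≥ X t whenever ρ t = 1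
  have hμX : ∀ t, ρ t = 1 → X t ≤ μ := by
    intro t ht
    have := le_ciSup hbdd t
    rw [ht, one_mul] at this
    exact hμ ▸ this
  -- μ ≥ 0
  have hμ0 : 0 ≤ μ := by
    obtain ⟨t⟩ := ‹Nonempty (Fin τ)›
    have h1 : 0 ≤ ρ t * X t := by
      rcases hρ t with h | h <;> simp [h, hX t]
    exact le_trans h1 (hμ ▸ le_ciSup hbdd t)
  -- Xbar nonneg
  have hXbar0 : ∀ t, 0 ≤ Xbar t := by
    intro t
    rw [hXbar t]
    split_ifs <;> [exact hDbar t; exact hμ0]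
  -- pointwise: min (X t) (Dbar t) ≤ Xbar t
  have hpt : ∀ t, min (X t) (Dbar t) ≤ Xbar t := by
    intro t
    rw [hXbar t]
    split_ifs with h
    · exact min_le_right _ _
    · push_neg at h
      rcases hρ t with h0 | h1
      · exact absurd h0 h.1
      · exact le_trans (min_le_left _ _) (hμX t h1)
  -- sum inequality
  have hsum : (∑ t, U (T * min (X t) (Dbar t))) ≤ ∑ t, U (T * Xbar t) := by
    apply Finset.sum_le_sum
    intro t _
    exact hU (mul_le_mul_of_nonneg_left (hpt t) hT)
  -- the set S of slots with ρ = 1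
  set S : Finset (Fin τ) := Finset.univ.filter (fun t => ρ t = 1) with hS
  have hScard : S.card = k := by
    have : (∑ t, ρ t) = (S.card : ℝ) := by
      rw [← Finset.sum_filter_add_sum_filter_not Finset.univ (fun t => ρ t = 1) ρ]
      have h1 : ∑ t ∈ Finset.univ.filter (fun t => ρ t = 1), ρ t = (S.card : ℝ) := by
        rw [Finset.sum_congr rfl (fun t ht => (Finset.mem_filter.mp ht).2)]
        simp [hS]
      have h2 : ∑ t ∈ Finset.univ.filter (fun t => ¬ ρ t = 1), ρ t = 0 := by
        apply Finset.sum_eq_zero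
        intro t ht
        rcases hρ t with h | h
        · exact h
        · exact absurd h (Finset.mem_filter.mp ht).2
      rw [h1, h2, add_zero]
    rw [this] at hρsum
    exact_mod_cast hρsum
  have hk1 : 1 ≤ k := by
    rw [hk]
    rw [Nat.one_le_ceil_iff]
    positivity
  have hSne : S.Nonempty := Finset.card_pos.mp (hScard ▸ hk1)
  -- sup' of Xbar over S is ≤ μ
  have hsup : S.sup' hSne Xbar ≤ μ := by
    apply Finset.sup'_le
    intro t ht
    have ht1 : ρ t = 1 := (Finset.mem_filter.mp ht).2
    rw [hXbar t]
    split_ifs with h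
    · rcases h with h | h
      · exact absurd ht1 (by rw [h]; norm_num)
      · exact h
    · exact le_refl μ
  -- mu95 τ Xbar ≤ μ
  have hmem : S.sup' hSne Xbar ∈ {m : ℝ | ∃ (S : Finset (Fin τ)) (hS : S.Nonempty),
      S.card = ⌈(0.95 : ℝ) * τ⌉₊ ∧ m = S.sup' hS Xbar} :=
    ⟨S, hSne, hk ▸ hScard, rfl⟩
  have hbddbelow : BddBelow {m : ℝ | ∃ (S : Finset (Fin τ)) (hS : S.Nonempty),
      S.card = ⌈(0.95 : ℝ) * τ⌉₊ ∧ m = S.sup' hS Xbar} := by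
    refine ⟨0, ?_⟩
    rintro m ⟨S', hS', _, rfl⟩
    obtain ⟨a, ha⟩ := hS'
    exact le_trans (hXbar0 a) (Finset.le_sup' _ ha)
  have hmu95 : mu95 τ Xbar ≤ μ := le_trans (csInf_le hbddbelow hmem) hsup
  have hδmu : δ * mu95 τ Xbar ≤ δ * mu95 τ X := by
    rw [← hμ95]
    exact mul_le_mul_of_nonneg_left hmu95 hδ
  linarith
end
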